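/- Suppose (T_1,…,T_K) satisfies the balance equations of the block-model Dirichlet problem for label 1, with mean temperature \bar T = (s_1 + Σ_{j=1}^K (n_j − s_j)·T_j)/N. Then the centered temperatures δ_k = T_k − \bar T satisfy (s_1(p−q) + Nq)·δ_1 = s_1·(p−q)·(1 − \bar T), and for every k ≠ 1, (s_k(p−q) + Nq)·δ_k = −s_k·(p−q)·\bar T. -/

import Mathlib

open Finset

/-- In the block model, if `T` satisfies the balance equations of the
Dirichlet problem for label 1 (block 1 indexed by `i1`) with mean temperature
`T̄ = (s₁ + ∑ j (n j − s j)·T j)/N`, then the centered temperatures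
`δ_k = T_k − T̄` satisfy `(s₁(p−q) + Nq)·δ₁ = s₁·(p−q)·(1 − T̄)` and, for every
`k ≠ 1`, `(s_k(p−q) + Nq)·δ_k = −s_k·(p−q)·T̄`. -/
theorem dirichlet_block_model_centered_temperatures
    (K : ℕ) (n s : Fin K → ℕ)
    (hn : ∀ k, 1 ≤ n k) (hs : ∀ k, s k ≤ n k)
    (p q : ℝ) (i1 : Fin K) (T : Fin K → ℝ)
    (N : ℕ) (hN : N = ∑ k, n k)
    (hbal : ∀ k, ((n k : ℝ) * (p - q) + (N : ℝ) * q) * T k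
      = (if k = i1 then (s i1 : ℝ) * p else (s i1 : ℝ) * q)
        + ((n k : ℝ) - (s k : ℝ)) * p * T k
        + ∑ j ∈ univ.erase k, ((n j : ℝ) - (s j : ℝ)) * q * T j)
    (Tbar : ℝ)
    (hTbar : Tbar = ((s i1 : ℝ) + ∑ j, ((n j : ℝ) - (s j : ℝ)) * T j) / (N : ℝ)) :
    ((s i1 : ℝ) * (p - q) + (N : ℝ) * q) * (T i1 - Tbar)
      = (s i1 : ℝ) * (p - q) * (1 - Tbar) ∧
    ∀ k, k ≠ i1 → ((s k : ℝ) * (p - q) + (N : ℝ) * q) * (T k - Tbar)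
      = -(s k : ℝ) * (p - q) * Tbar := by
  have hNpos : 0 < N := by
    rw [hN]; exact Finset.sum_pos (fun k _ => hn k) ⟨i1, mem_univ i1⟩
  have hN0 : (N : ℝ) ≠ 0 := Nat.cast_ne_zero.mpr hNpos.ne'
  have hsum : ∑ j, ((n j : ℝ) - (s j : ℝ)) * q * T j
      = q * (Tbar * (N : ℝ) - (s i1 : ℝ)) := by
    have h1 : ∑ j, ((n j : ℝ) - (s j : ℝ)) * q * T j
        = q * ∑ j, ((n j : ℝ) - (s j : ℝ)) * T j := by
      rw [Finset.mul_sum]; exact Finset.sum_congr rfl (fun j _ => by ring)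
    rw [h1, hTbar]; field_simp; ring
  constructor
  · have hb := hbal i1
    rw [if_pos rfl, Finset.sum_erase_eq_sub (mem_univ i1), hsum] at hb
    linarith [hb]
  · intro k hk
    have hb := hbal k
    rw [if_neg hk, Finset.sum_erase_eq_sub (mem_univ k), hsum] at hb
    nlinarith [hb]
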